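/- Let ∂ be an additive cellular automaton of dimension n-1 over ℤ/mℤ with coefficients σ = Σ_j w_j and σ_k = Σ_j j_k w_j. Then for every natural number i, the i-th iterate of ∂ applied to the arithmetic array AA(a,d) is the arithmetic array AA(σ^i a + i σ^{i-1} Σ_{k=1}^{n-1} σ_k d_k, σ^i d). -/

import Mathlib

open Finset

/-- The box `[-r, r]^N` of indices of the weight array. -/
noncomputable def box (r N : ℕ) : Finset (Fin N → ℤ) :=
  Fintype.piFinset fun _ : Fin N => Finset.Icc (-(r : ℤ)) (r : ℤ)

/-- The arithmetic array `AA(a, d)` with first element `a` and common difference `d`. -/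
def AA (m N : ℕ) (a : ZMod m) (d : Fin N → ZMod m) : (Fin N → ℤ) → ZMod m :=
  fun i => a + ∑ k, (i k : ZMod m) * d k

/-- The additive cellular automaton of dimension `N`, radius `r` and weight array `W`. -/
noncomputable def ACA (m N r : ℕ) (W : (Fin N → ℤ) → ℤ) (A : (Fin N → ℤ) → ZMod m) :
    (Fin N → ℤ) → ZMod m :=
  fun i => ∑ j ∈ box r N, (W j : ZMod m) * A (i + j)

lemma step (m N r : ℕ) (W : (Fin N → ℤ) → ℤ) (a : ZMod m) (d : Fin N → ZMod m) :
    ACA m N r W (AA m N a d) =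
      AA m N (((∑ j ∈ box r N, W j : ℤ) : ZMod m) * a +
        ∑ k, ((∑ j ∈ box r N, j k * W j : ℤ) : ZMod m) * d k)
        (fun k => ((∑ j ∈ box r N, W j : ℤ) : ZMod m) * d k) := by
  funext x
  simp only [ACA, AA, Pi.add_apply, Int.cast_add, Int.cast_sum, Int.cast_mul, mul_add, add_mul,
    Finset.mul_sum, Finset.sum_mul, Finset.sum_add_distrib]
  ring_nf
  rw [add_assoc, add_assoc]
  congr 1
  rw [add_comm]
  congr 1
  · rw [Finset.sum_comm]
    exact Finset.sum_congr rfl fun _ _ => Finset.sum_congr rfl fun _ _ => by ring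
  · rw [Finset.sum_comm]
    exact Finset.sum_congr rfl fun _ _ => Finset.sum_congr rfl fun _ _ => by ring

/-- The `i`-th iterate of the ACA applied to the arithmetic array `AA(a,d)` is the
arithmetic array `AA(σ^i a + i σ^(i-1) ∑ σ_k d_k, σ^i d)`. -/
theorem stmt5 (m N r : ℕ) (W : (Fin N → ℤ) → ℤ) (a : ZMod m) (d : Fin N → ZMod m)
    (i : ℕ) :
    (ACA m N r W)^[i] (AA m N a d) =
      AA m N
        (((∑ j ∈ box r N, W j : ℤ) : ZMod m) ^ i * a +
          (i : ZMod m) * ((∑ j ∈ box r N, W j : ℤ) : ZMod m) ^ (i - 1) *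
            ∑ k, ((∑ j ∈ box r N, j k * W j : ℤ) : ZMod m) * d k)
        (fun k => ((∑ j ∈ box r N, W j : ℤ) : ZMod m) ^ i * d k) := by
  induction i with
  | zero => simp
  | succ n ih =>
    rw [Function.iterate_succ_apply', ih, step]
    have hAA : ∀ (a1 a2 : ZMod m) (d1 d2 : Fin N → ZMod m), a1 = a2 → d1 = d2 →
        AA m N a1 d1 = AA m N a2 d2 := by rintro _ _ _ _ rfl rfl; rfl
    refine hAA _ _ _ _ ?_ (funext fun k => by ring)
    · have h : ∑ k, ((∑ j ∈ box r N, j k * W j : ℤ) : ZMod m) *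
          (((∑ j ∈ box r N, W j : ℤ) : ZMod m) ^ n * d k) =
          ((∑ j ∈ box r N, W j : ℤ) : ZMod m) ^ n *
          ∑ k, ((∑ j ∈ box r N, j k * W j : ℤ) : ZMod m) * d k := by
        rw [Finset.mul_sum]
        exact Finset.sum_congr rfl fun _ _ => by ring
      rw [h]
      cases n with
      | zero => simp
      | succ k =>
        simp only [Nat.succ_sub_one]
        push_cast
        ring
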